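/- For any monoid M and any M-pigmented word p, one has p ∼ first_1(p) · first_1^R(p), where · denotes concatenation. -/

import Mathlib

/-- An `M`-pigmented word of arity `n`: a list of letters `(i, α)` whose value is
`i ∈ Fin n` (representing the value `i + 1 ∈ {1, …, n}`) and whose pigment is `α ∈ M`. -/
abbrev PW (M : Type*) (n : ℕ) : Type _ := List (Fin n × M)

/-- The value `i` occurs in the word `p`. -/
def hasVal {M : Type*} {n : ℕ} (p : PW M n) (i : Fin n) : Prop := ∃ l ∈ p, l.1 = i

/-- `⤳₁`: delete a letter whose value occurs both before and after it
(a position which is neither a left `1`-witness nor a right `1`-witness). -/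
def Step1 {M : Type*} {n : ℕ} (u v : PW M n) : Prop :=
  ∃ (p p' : PW M n) (i : Fin n) (α : M),
    u = p ++ (i, α) :: p' ∧ v = p ++ p' ∧ hasVal p i ∧ hasVal p' i

/-- `⤳₂`: swap two adjacent letters `i₁^{α₁} i₂^{α₂}` with distinct values, where
`i₁` occurs after, `i₂` occurs before, and `i₂` does not occur after. -/
def Step2 {M : Type*} {n : ℕ} (u v : PW M n) : Prop :=
  ∃ (p p' : PW M n) (i₁ i₂ : Fin n) (α₁ α₂ : M),
    u = p ++ (i₁, α₁) :: (i₂, α₂) :: p' ∧ v = p ++ (i₂, α₂) :: (i₁, α₁) :: p' ∧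
    i₁ ≠ i₂ ∧ hasVal p' i₁ ∧ hasVal p i₂ ∧ ¬ hasVal p' i₂

/-- `⤳₃`: contract two equal adjacent letters to one. -/
def Step3 {M : Type*} {n : ℕ} (u v : PW M n) : Prop :=
  ∃ (p p' : PW M n) (i : Fin n) (α : M),
    u = p ++ (i, α) :: (i, α) :: p' ∧ v = p ++ (i, α) :: p'

/-- The union `⤳₁ ∪ ⤳₂ ∪ ⤳₃`; the relation `∼` is its reflexive, symmetric and
transitive closure `Relation.EqvGen MagnStep`. -/
def MagnStep {M : Type*} {n : ℕ} (u v : PW M n) : Prop := Step1 u v ∨ Step2 u v ∨ Step3 u v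

/-- `firstKAux k pre p` keeps those letters of `p` whose position is a left
`k`-witness, given that the prefix `pre` has already been read. -/
def firstKAux {M : Type*} {n : ℕ} (k : ℕ) : PW M n → PW M n → PW M n
  | _, [] => []
  | pre, l :: t =>
    if pre.countP (fun x => decide (x.1 = l.1)) < k
    then l :: firstKAux k (pre ++ [l]) t
    else firstKAux k (pre ++ [l]) t

/-- `firstK k p` keeps, for each value, the first `k` occurrences of that value in `p`
(the letters at left `k`-witness positions). -/
def firstK {M : Type*} {n : ℕ} (k : ℕ) (p : PW M n) : PW M n := firstKAux k [] p

/-- `firstKR k p` keeps, for each value, the last `k` occurrences of that value in `p`: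
it is the reverse of `firstK k` applied to the reverse of `p`. -/
def firstKR {M : Type*} {n : ℕ} (k : ℕ) (p : PW M n) : PW M n := (firstK k p.reverse).reverse

section Lemmas
variable {M : Type*} {n : ℕ}

lemma hasVal_append {a b : PW M n} {i : Fin n} :
    hasVal (a ++ b) i ↔ hasVal a i ∨ hasVal b i := by
  simp [hasVal, List.mem_append, or_and_right, exists_or]

lemma hasVal_cons {l : Fin n × M} {t : PW M n} {i : Fin n} :
    hasVal (l :: t) i ↔ l.1 = i ∨ hasVal t i := by
  simp [hasVal]

lemma not_hasVal_nil {i : Fin n} : ¬ hasVal ([] : PW M n) i := by simp [hasVal]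

lemma hasVal_singleton {x : Fin n × M} {j : Fin n} : hasVal [x] j ↔ x.1 = j := by
  simp [hasVal]

lemma hasVal_reverse {q : PW M n} {i : Fin n} : hasVal q.reverse i ↔ hasVal q i := by
  simp [hasVal]

lemma countP_lt_one {c : PW M n} {i : Fin n} :
    (c.countP (fun x => decide (x.1 = i)) < 1) ↔ ¬ hasVal c i := by
  rw [Nat.lt_one_iff, List.countP_eq_zero]
  simp only [hasVal, not_exists, not_and, decide_eq_true_eq]

lemma firstKAux_nil {k : ℕ} {c : PW M n} : firstKAux k c [] = [] := rfl

lemma firstKAux_cons_pos {c t : PW M n} {l : Fin n × M} (h : ¬ hasVal c l.1) :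
    firstKAux 1 c (l :: t) = l :: firstKAux 1 (c ++ [l]) t := by
  rw [firstKAux, if_pos (countP_lt_one.mpr h)]

lemma firstKAux_cons_neg {c t : PW M n} {l : Fin n × M} (h : hasVal c l.1) :
    firstKAux 1 c (l :: t) = firstKAux 1 (c ++ [l]) t := by
  rw [firstKAux, if_neg (fun hc => (countP_lt_one.mp hc) h)]

lemma firstKAux_congr : ∀ (q c c' : PW M n),
    (∀ j, hasVal q j → (hasVal c j ↔ hasVal c' j)) →
    firstKAux 1 c q = firstKAux 1 c' q := by
  intro q
  induction q with
  | nil => intro c c' _; rfl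
  | cons l t ih =>
    intro c c' h
    have hl : hasVal c l.1 ↔ hasVal c' l.1 := h l.1 (hasVal_cons.mpr (Or.inl rfl))
    have ht : ∀ j, hasVal t j → (hasVal (c ++ [l]) j ↔ hasVal (c' ++ [l]) j) := by
      intro j hj
      rw [hasVal_append, hasVal_append, h j (hasVal_cons.mpr (Or.inr hj))]
    by_cases hc : hasVal c l.1
    · rw [firstKAux_cons_neg hc, firstKAux_cons_neg (hl.mp hc), ih _ _ ht]
    · rw [firstKAux_cons_pos hc, firstKAux_cons_pos (fun h' => hc (hl.mpr h')), ih _ _ ht]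

lemma firstKAux_append : ∀ (a b c : PW M n),
    firstKAux 1 c (a ++ b) = firstKAux 1 c a ++ firstKAux 1 (c ++ a) b := by
  intro a
  induction a with
  | nil => intro b c; simp [firstKAux_nil]
  | cons l t ih =>
    intro b c
    by_cases hc : hasVal c l.1
    · rw [List.cons_append, firstKAux_cons_neg hc, firstKAux_cons_neg hc, ih,
        List.append_assoc]
      simp
    · rw [List.cons_append, firstKAux_cons_pos hc, firstKAux_cons_pos hc, ih,
        List.append_assoc]
      simp

lemma mem_firstKAux : ∀ (q c : PW M n) (m : Fin n × M), m ∈ firstKAux 1 c q → m ∈ q := by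
  intro q
  induction q with
  | nil => intro c m h; simp [firstKAux_nil] at h
  | cons l t ih =>
    intro c m h
    by_cases hc : hasVal c l.1
    · rw [firstKAux_cons_neg hc] at h
      exact List.mem_cons_of_mem _ (ih _ _ h)
    · rw [firstKAux_cons_pos hc] at h
      rcases List.mem_cons.mp h with h | h
      · exact h ▸ List.mem_cons_self
      · exact List.mem_cons_of_mem _ (ih _ _ h)

lemma hasVal_firstKAux : ∀ (q c : PW M n) (j : Fin n),
    hasVal q j → ¬ hasVal c j → hasVal (firstKAux 1 c q) j := by
  intro q
  induction q with
  | nil => intro c j h _; exact absurd h not_hasVal_nil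
  | cons l t ih =>
    intro c j h hc
    by_cases hcl : hasVal c l.1
    · rw [firstKAux_cons_neg hcl]
      have hjl : l.1 ≠ j := fun e => hc (e ▸ hcl)
      have ht : hasVal t j := by
        rcases hasVal_cons.mp h with h | h
        · exact absurd h hjl
        · exact h
      refine ih _ _ ht ?_
      rw [hasVal_append]
      rintro (h' | h')
      · exact hc h'
      · rcases hasVal_cons.mp h' with h'' | h''
        · exact hjl h''
        · exact not_hasVal_nil h''
    · rw [firstKAux_cons_pos hcl]
      rcases hasVal_cons.mp h with h | h
      · exact hasVal_cons.mpr (Or.inl h)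
      · by_cases hjl : l.1 = j
        · exact hasVal_cons.mpr (Or.inl hjl)
        · refine hasVal_cons.mpr (Or.inr (ih _ _ h ?_))
          rw [hasVal_append]
          rintro (h' | h')
          · exact hc h'
          · rcases hasVal_cons.mp h' with h'' | h''
            · exact hjl h''
            · exact not_hasVal_nil h''

lemma hasVal_firstK {q : PW M n} {j : Fin n} (h : hasVal q j) : hasVal (firstK 1 q) j :=
  hasVal_firstKAux q [] j h not_hasVal_nil

lemma hasVal_firstKR {q : PW M n} {j : Fin n} (h : hasVal q j) : hasVal (firstKR 1 q) j := by
  rw [firstKR, hasVal_reverse]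
  exact hasVal_firstK (hasVal_reverse.mpr h)

lemma hasVal_of_firstK {q : PW M n} {j : Fin n} (h : hasVal (firstK 1 q) j) : hasVal q j := by
  obtain ⟨m, hm, hm1⟩ := h
  exact ⟨m, mem_firstKAux _ _ _ hm, hm1⟩

lemma hasVal_of_firstKR {q : PW M n} {j : Fin n} (h : hasVal (firstKR 1 q) j) : hasVal q j := by
  rw [firstKR, hasVal_reverse] at h
  exact hasVal_reverse.mp (hasVal_of_firstK h)

lemma firstKR_cons_pos {t : PW M n} {l : Fin n × M} (h : hasVal t l.1) :
    firstKR 1 (l :: t) = firstKR 1 t := by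
  rw [firstKR, List.reverse_cons, firstK, firstKAux_append,
    firstKAux_cons_neg (by simpa [hasVal_reverse] using h), firstKAux_nil, List.append_nil]
  rfl

lemma firstKR_cons_neg {t : PW M n} {l : Fin n × M} (h : ¬ hasVal t l.1) :
    firstKR 1 (l :: t) = l :: firstKR 1 t := by
  rw [firstKR, List.reverse_cons, firstK, firstKAux_append,
    firstKAux_cons_pos (by simpa [hasVal_reverse] using h), firstKAux_nil]
  simp [firstKR, firstK]

end Lemmas

section Eqv
variable {M : Type*} {n : ℕ}

open Relation

lemma eqv_prepend (c : PW M n) {u v : PW M n} (h : Relation.EqvGen MagnStep u v) :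
    Relation.EqvGen MagnStep (c ++ u) (c ++ v) := by
  induction h with
  | rel x y hxy =>
    apply Relation.EqvGen.rel
    rcases hxy with ⟨p, p', i, α, hu, hv, h1, h2⟩ |
      ⟨p, p', i₁, i₂, α₁, α₂, hu, hv, h1, h2, h3, h4⟩ | ⟨p, p', i, α, hu, hv⟩
    · exact Or.inl ⟨c ++ p, p', i, α, by simp [hu], by simp [hv],
        hasVal_append.mpr (Or.inr h1), h2⟩
    · exact Or.inr (Or.inl ⟨c ++ p, p', i₁, i₂, α₁, α₂, by simp [hu], by simp [hv],
        h1, h2, hasVal_append.mpr (Or.inr h3), h4⟩)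
    · exact Or.inr (Or.inr ⟨c ++ p, p', i, α, by simp [hu], by simp [hv]⟩)
  | refl x => exact Relation.EqvGen.refl _
  | symm x y _ ih => exact Relation.EqvGen.symm _ _ ih
  | trans x y z _ _ ih1 ih2 => exact Relation.EqvGen.trans _ _ _ ih1 ih2

lemma firstKAux_split : ∀ (q c : PW M n) (i : Fin n) (α : M),
    ¬ hasVal c i → hasVal q i →
    ∃ (A : PW M n) (β : M) (B : PW M n),
      firstKAux 1 c q = A ++ (i, β) :: B ∧ firstKAux 1 (c ++ [(i, α)]) q = A ++ B := by
  intro q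
  induction q with
  | nil => intro c i α _ h; exact absurd h not_hasVal_nil
  | cons m s ih =>
    intro c i α hc h
    by_cases hj : hasVal c m.1
    · have hmi : m.1 ≠ i := fun e => hc (e ▸ hj)
      have hs : hasVal s i := by
        rcases hasVal_cons.mp h with h' | h'
        · exact absurd h' hmi
        · exact h'
      obtain ⟨A, β, B, h1, h2⟩ := ih (c ++ [m]) i α
        (by rw [hasVal_append]; rintro (h' | h')
            · exact hc h'
            · rcases hasVal_cons.mp h' with h'' | h''
              · exact hmi h''
              · exact not_hasVal_nil h'') hs
      refine ⟨A, β, B, ?_, ?_⟩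
      · rw [firstKAux_cons_neg hj, h1]
      · rw [firstKAux_cons_neg (hasVal_append.mpr (Or.inl hj)),
          firstKAux_congr _ (c ++ [(i, α)] ++ [m]) (c ++ [m] ++ [(i, α)])
            (by intro j _; simp only [hasVal_append, hasVal_singleton]; tauto), h2]
    · by_cases hmi : m.1 = i
      · have hm : m = (i, m.2) := by rw [← hmi]
        refine ⟨[], m.2, firstKAux 1 (c ++ [m]) s, ?_, ?_⟩
        · rw [firstKAux_cons_pos hj, List.nil_append, ← hm]
        · rw [firstKAux_cons_neg (hasVal_append.mpr (Or.inr (hasVal_singleton.mpr hmi.symm))),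
            firstKAux_congr _ (c ++ [(i, α)] ++ [m]) (c ++ [m])
              (by intro j _; simp only [hasVal_append, hasVal_singleton, hmi]; tauto),
            List.nil_append]
      · have hs : hasVal s i := by
          rcases hasVal_cons.mp h with h' | h'
          · exact absurd h' hmi
          · exact h'
        obtain ⟨A, β, B, h1, h2⟩ := ih (c ++ [m]) i α
          (by rw [hasVal_append]; rintro (h' | h')
              · exact hc h'
              · rcases hasVal_cons.mp h' with h'' | h''
                · exact hmi h''
                · exact not_hasVal_nil h'') hs
        refine ⟨m :: A, β, B, ?_, ?_⟩
        · rw [firstKAux_cons_pos hj, h1, List.cons_append]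
        · have hj' : ¬ hasVal (c ++ [(i, α)]) m.1 := by
            rw [hasVal_append]
            rintro (h' | h')
            · exact hj h'
            · rcases hasVal_cons.mp h' with h'' | h''
              · exact hmi h''.symm
              · exact not_hasVal_nil h''
          rw [firstKAux_cons_pos hj',
            firstKAux_congr _ (c ++ [(i, α)] ++ [m]) (c ++ [m] ++ [(i, α)])
              (by intro j _; simp only [hasVal_append, hasVal_singleton]; tauto),
            h2, List.cons_append]

lemma move_lemma : ∀ (A P C : PW M n) (i : Fin n) (α : M),
    hasVal P i → ¬ hasVal (A ++ C) i → (∀ m ∈ A, hasVal C m.1) →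
    Relation.EqvGen MagnStep (P ++ (i, α) :: (A ++ C)) (P ++ A ++ (i, α) :: C) := by
  intro A
  induction A with
  | nil => intro P C i α _ _ _; simp only [List.nil_append, List.append_nil]; exact .refl _
  | cons m A' ih =>
    intro P C i α hP hAC hmem
    have hC : hasVal C m.1 := hmem m List.mem_cons_self
    have hmi : m.1 ≠ i := fun e => hAC (hasVal_append.mpr (Or.inr (e ▸ hC)))
    have hA'C : ¬ hasVal (A' ++ C) i := by
      intro h'
      exact hAC (by rw [hasVal_append] at h' ⊢
                    rcases h' with h' | h'
                    · exact Or.inl (hasVal_cons.mpr (Or.inr h'))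
                    · exact Or.inr h')
    have step : Step2 (P ++ (m.1, m.2) :: (i, α) :: (A' ++ C))
        (P ++ (i, α) :: (m.1, m.2) :: (A' ++ C)) :=
      ⟨P, A' ++ C, m.1, i, m.2, α, rfl, rfl, hmi, hasVal_append.mpr (Or.inr hC), hP, hA'C⟩
    have e1 : Relation.EqvGen MagnStep (P ++ (i, α) :: ((m :: A') ++ C))
        (P ++ m :: (i, α) :: (A' ++ C)) := by
      refine Relation.EqvGen.symm _ _ (Relation.EqvGen.rel _ _ (Or.inr (Or.inl ?_)))
      simpa using step
    have e2 := ih (P ++ [m]) C i α (hasVal_append.mpr (Or.inl hP)) hA'C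
      (fun m' hm' => hmem m' (List.mem_cons_of_mem _ hm'))
    refine Relation.EqvGen.trans _ _ _ e1 ?_
    have hform : P ++ m :: (i, α) :: (A' ++ C) = (P ++ [m]) ++ (i, α) :: (A' ++ C) := by simp
    have hform2 : (P ++ [m]) ++ A' ++ (i, α) :: C = P ++ (m :: A') ++ (i, α) :: C := by simp
    rw [hform, ← hform2]
    exact e2

end Eqv

/-- Every `M`-pigmented word is `∼`-equivalent to the concatenation of its
`first₁` part and its `first₁^R` part. -/
theorem eqvGen_first_one_concat (M : Type*) [Monoid M] (n : ℕ) (p : PW M n) :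
    Relation.EqvGen MagnStep p (firstK 1 p ++ firstKR 1 p) := by
  induction p with
  | nil => exact Relation.EqvGen.refl _
  | cons l t ih =>
    obtain ⟨i, α⟩ := l
    have hfK : firstK 1 ((i, α) :: t) = (i, α) :: firstKAux 1 [(i, α)] t := by
      rw [firstK, firstKAux_cons_pos not_hasVal_nil, List.nil_append]
    by_cases hit : hasVal t i
    · obtain ⟨A, β, B, hF, hF'⟩ := firstKAux_split t [] i α not_hasVal_nil hit
      rw [hfK, firstKR_cons_pos (show hasVal t i from hit), List.nil_append] at *
      rw [hF']
      have e1 : Relation.EqvGen MagnStep ((i, α) :: t)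
          ((i, α) :: (firstK 1 t ++ firstKR 1 t)) := eqv_prepend [(i, α)] ih
      have step : Step1 ((i, α) :: (firstK 1 t ++ firstKR 1 t))
          (((i, α) :: A) ++ (B ++ firstKR 1 t)) :=
        ⟨(i, α) :: A, B ++ firstKR 1 t, i, β, by rw [firstK, hF]; simp, rfl,
          hasVal_cons.mpr (Or.inl rfl), hasVal_append.mpr (Or.inr (hasVal_firstKR hit))⟩
      refine Relation.EqvGen.trans _ _ _ e1
        (Relation.EqvGen.trans _ _ _ (Relation.EqvGen.rel _ _ (Or.inl step)) ?_)
      have : ((i, α) :: A) ++ (B ++ firstKR 1 t)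
          = ((i, α) :: (A ++ B)) ++ firstKR 1 t := by simp
      rw [← this]
      exact Relation.EqvGen.refl _
    · have hFsub : firstKAux 1 [(i, α)] t = firstK 1 t := by
        apply firstKAux_congr
        intro j hj
        simp only [hasVal_singleton]
        constructor
        · intro e; exact absurd hj (e ▸ hit)
        · intro h'; exact absurd h' not_hasVal_nil
      have hnot : ¬ hasVal (firstK 1 t ++ firstKR 1 t) i := by
        rw [hasVal_append]
        rintro (h' | h')
        · exact hit (hasVal_of_firstK h')
        · exact hit (hasVal_of_firstKR h')
      have hmem : ∀ m ∈ firstK 1 t, hasVal (firstKR 1 t) m.1 :=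
        fun m hm => hasVal_firstKR ⟨m, mem_firstKAux _ _ _ hm, rfl⟩
      have e0 : Relation.EqvGen MagnStep ((i, α) :: t) ((i, α) :: (i, α) :: t) :=
        Relation.EqvGen.symm _ _
          (Relation.EqvGen.rel _ _ (Or.inr (Or.inr ⟨[], t, i, α, rfl, rfl⟩)))
      have e1 : Relation.EqvGen MagnStep ((i, α) :: (i, α) :: t)
          ((i, α) :: (i, α) :: (firstK 1 t ++ firstKR 1 t)) :=
        eqv_prepend [(i, α), (i, α)] ih
      have e2 := move_lemma (firstK 1 t) [(i, α)] (firstKR 1 t) i α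
        (hasVal_singleton.mpr rfl) hnot hmem
      rw [hfK, firstKR_cons_neg (show ¬ hasVal t i from hit), hFsub]
      refine Relation.EqvGen.trans _ _ _ e0 (Relation.EqvGen.trans _ _ _ e1 ?_)
      have h2 : [(i, α)] ++ firstK 1 t ++ (i, α) :: firstKR 1 t
          = ((i, α) :: firstK 1 t) ++ ((i, α) :: firstKR 1 t) := by simp
      rw [← h2]
      exact e2
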